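/- Assume |f(x,u,v,w)| ≤ M for all (x,u,v,w) ∈ D_M. Let φ ∈ C(Ω̄) with ‖φ‖ ≤ M, and let u be a function with u, Δu, Δ²u continuous on Ω̄ satisfying Δ³u = φ in Ω and u = Δu = Δ²u = 0 on Γ. Then ‖u‖ ≤ C_Ω³M, ‖Δu‖ ≤ C_Ω²M, ‖Δ²u‖ ≤ C_ΩM, and consequently max_{x∈Ω̄}|f(x, u(x), Δu(x), Δ²u(x))| ≤ M (so the operator φ ↦ f(·, u, Δu, Δ²u) maps the ball B[O,M] = {φ ∈ C(Ω̄) : ‖φ‖ ≤ M} into itself). -/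

import Mathlib

open scoped BigOperators

/-- The Laplace operator on `ℝⁿ` (realized as `EuclideanSpace ℝ (Fin n)`):
`Δ f x = ∑ i ∂²f/∂xᵢ² (x)`. -/
noncomputable def lap {n : ℕ} (f : EuclideanSpace ℝ (Fin n) → ℝ)
    (x : EuclideanSpace ℝ (Fin n)) : ℝ :=
  ∑ i : Fin n, fderiv ℝ (fun y => fderiv ℝ f y (EuclideanSpace.single i 1)) x
    (EuclideanSpace.single i 1)

/-- `max_{x ∈ S} |y x|` (as a supremum). -/
noncomputable def supNorm {α : Type*} (S : Set α) (y : α → ℝ) : ℝ :=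
  sSup ((fun x => |y x|) '' S)

/-- `u` is a classical solution of the triharmonic problem `Δ³u = φ` in `Ω`,
`u = Δu = Δ²u = 0` on `Γ = ∂Ω`, with `u`, `Δu`, `Δ²u` continuous on `Ω̄`. -/
def IsClassicalTriharm {n : ℕ} (Ω : Set (EuclideanSpace ℝ (Fin n)))
    (u φ : EuclideanSpace ℝ (Fin n) → ℝ) : Prop :=
  ContinuousOn u (closure Ω) ∧ ContinuousOn (lap u) (closure Ω) ∧
  ContinuousOn (lap (lap u)) (closure Ω) ∧
  ContDiffOn ℝ 2 u Ω ∧ ContDiffOn ℝ 2 (lap u) Ω ∧ ContDiffOn ℝ 2 (lap (lap u)) Ω ∧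
  (∀ x ∈ Ω, lap (lap (lap u)) x = φ x) ∧
  (∀ x ∈ frontier Ω, u x = 0 ∧ lap u x = 0 ∧ lap (lap u) x = 0)

/-- `u` is a (classical) solution of problem (P):
`Δ³u = f(x, u, Δu, Δ²u)` in `Ω`, `u = Δu = Δ²u = 0` on `Γ = ∂Ω`. -/
def IsSolP {n : ℕ} (Ω : Set (EuclideanSpace ℝ (Fin n)))
    (f : EuclideanSpace ℝ (Fin n) → ℝ → ℝ → ℝ → ℝ)
    (u : EuclideanSpace ℝ (Fin n) → ℝ) : Prop :=
  IsClassicalTriharm Ω u (fun x => f x (u x) (lap u x) (lap (lap u) x))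

/-- `w` is a classical solution of the Poisson problem `Δw = φ` in `Ω`, `w = 0` on `∂Ω`. -/
def IsPoissonSol {n : ℕ} (Ω : Set (EuclideanSpace ℝ (Fin n)))
    (w φ : EuclideanSpace ℝ (Fin n) → ℝ) : Prop :=
  ContinuousOn w (closure Ω) ∧ ContDiffOn ℝ 2 w Ω ∧
  (∀ x ∈ Ω, lap w x = φ x) ∧ (∀ x ∈ frontier Ω, w x = 0)

open RealInnerProductSpace

private lemma fderiv_quad {n : ℕ} (a : ℝ) (c y : EuclideanSpace ℝ (Fin n))
    (e : EuclideanSpace ℝ (Fin n)) :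
    fderiv ℝ (fun z : EuclideanSpace ℝ (Fin n) => a * ⟪z - c, z - c⟫) y e
      = a * (⟪y - c, e⟫ + ⟪e, y - c⟫) := by
  have hy : HasFDerivAt (fun z : EuclideanSpace ℝ (Fin n) => z - c)
      (ContinuousLinearMap.id ℝ _) y := (hasFDerivAt_id y).sub_const c
  have h := (hy.inner ℝ hy).const_mul a
  rw [h.fderiv]
  simp [fderivInnerCLM_apply]

lemma lap_quad {n : ℕ} (a : ℝ) (c x : EuclideanSpace ℝ (Fin n)) :
    lap (fun y : EuclideanSpace ℝ (Fin n) => a * ⟪y - c, y - c⟫) x = a * (2 * n) := by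
  unfold lap
  have : ∀ i : Fin n,
      fderiv ℝ (fun y : EuclideanSpace ℝ (Fin n) =>
        fderiv ℝ (fun z : EuclideanSpace ℝ (Fin n) => a * ⟪z - c, z - c⟫) y
          (EuclideanSpace.single i 1)) x (EuclideanSpace.single i 1) = a * 2 := by
    intro i
    have h1 : (fun y : EuclideanSpace ℝ (Fin n) =>
        fderiv ℝ (fun z : EuclideanSpace ℝ (Fin n) => a * ⟪z - c, z - c⟫) y
          (EuclideanSpace.single i 1))
        = fun y : EuclideanSpace ℝ (Fin n) => a * ((y i - c i) + (y i - c i)) := by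
      funext y
      rw [fderiv_quad]
      simp [EuclideanSpace.inner_single_right, EuclideanSpace.inner_single_left]
    rw [h1]
    have hp : HasFDerivAt (fun y : EuclideanSpace ℝ (Fin n) => y i)
        (EuclideanSpace.proj (𝕜 := ℝ) i) x := (EuclideanSpace.proj (𝕜 := ℝ) i).hasFDerivAt
    have h2 := (((hp.sub_const (c i)).add (hp.sub_const (c i))).const_mul a)
    rw [HasFDerivAt.fderiv (f := fun y : EuclideanSpace ℝ (Fin n) => a * (y i - c i + (y i - c i))) h2]
    simp
    ring
  rw [Finset.sum_congr rfl (fun i _ => this i)]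
  simp [Finset.card_univ]
  ring

lemma diff_dirderiv {n : ℕ} {s : Set (EuclideanSpace ℝ (Fin n))} (hs : IsOpen s)
    {w : EuclideanSpace ℝ (Fin n) → ℝ} (hw : ContDiffOn ℝ 2 w s)
    {x : EuclideanSpace ℝ (Fin n)} (hx : x ∈ s) (e : EuclideanSpace ℝ (Fin n)) :
    DifferentiableAt ℝ (fun y => fderiv ℝ w y e) x := by
  have h1 : ContDiffAt ℝ 1 (fderiv ℝ w) x :=
    (hw.contDiffAt (hs.mem_nhds hx)).fderiv_right (by norm_num)
  exact ((ContinuousLinearMap.apply ℝ ℝ e).differentiable.differentiableAt).comp x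
    (h1.differentiableAt (by norm_num))

lemma lap_add {n : ℕ} {s : Set (EuclideanSpace ℝ (Fin n))} (hs : IsOpen s)
    {w g : EuclideanSpace ℝ (Fin n) → ℝ} (hw : ContDiffOn ℝ 2 w s) (hg : ContDiff ℝ 2 g)
    {x : EuclideanSpace ℝ (Fin n)} (hx : x ∈ s) :
    lap (fun y => w y + g y) x = lap w x + lap g x := by
  unfold lap
  rw [← Finset.sum_add_distrib]
  refine Finset.sum_congr rfl fun i _ => ?_
  set e := EuclideanSpace.single (𝕜 := ℝ) i 1 with he
  have hev : (fun y => fderiv ℝ (fun z => w z + g z) y e)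
      =ᶠ[nhds x] (fun y => fderiv ℝ w y e + fderiv ℝ g y e) := by
    filter_upwards [hs.mem_nhds hx] with y hy
    have hdw : DifferentiableAt ℝ w y :=
      (hw.contDiffAt (hs.mem_nhds hy)).differentiableAt (by norm_num)
    rw [fderiv_fun_add hdw (hg.differentiable (by norm_num) y)]
    rfl
  rw [hev.fderiv_eq]
  have hdw := diff_dirderiv hs hw hx e
  have hdg := diff_dirderiv hs (hg.contDiffOn) hx e
  rw [fderiv_fun_add hdw hdg]
  rfl

lemma lap_neg {n : ℕ} (w : EuclideanSpace ℝ (Fin n) → ℝ) (x : EuclideanSpace ℝ (Fin n)) :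
    lap (fun y => -(w y)) x = -(lap w x) := by
  unfold lap
  rw [← Finset.sum_neg_distrib]
  refine Finset.sum_congr rfl fun i _ => ?_
  have h1 : (fun y => fderiv ℝ (fun z => -(w z)) y (EuclideanSpace.single (𝕜 := ℝ) i 1))
      = fun y => -(fderiv ℝ w y (EuclideanSpace.single (𝕜 := ℝ) i 1)) := by
    funext y
    rw [fderiv_fun_neg]
    rfl
  rw [h1, fderiv_fun_neg]
  rfl

lemma max_principle {n : ℕ} {Ω : Set (EuclideanSpace ℝ (Fin n))} (hΩ : IsOpen Ω)
    (hcomp : IsCompact (closure Ω)) {v : EuclideanSpace ℝ (Fin n) → ℝ}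
    (hvc : ContinuousOn v (closure Ω)) (hv2 : ContDiffOn ℝ 2 v Ω)
    (hsub : ∀ x ∈ Ω, 0 < lap v x) {x₀ : EuclideanSpace ℝ (Fin n)}
    (hx₀ : x₀ ∈ closure Ω) : ∃ y ∈ frontier Ω, v x₀ ≤ v y := by
  obtain ⟨z, hz, hmax⟩ := hcomp.exists_isMaxOn ⟨x₀, hx₀⟩ hvc
  by_cases hzΩ : z ∈ Ω
  · exfalso
    -- some direction has positive second derivative
    have hpos := hsub z hzΩ
    have hex : ∃ i : Fin n, 0 < fderiv ℝ
        (fun y => fderiv ℝ v y (EuclideanSpace.single i 1)) z (EuclideanSpace.single i 1) := by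
      by_contra hcon
      push_neg at hcon
      have : lap v z ≤ 0 := Finset.sum_nonpos fun i _ => hcon i
      linarith
    obtain ⟨i, hi⟩ := hex
    set e := EuclideanSpace.single (𝕜 := ℝ) i 1 with he
    obtain ⟨δ, δpos, hδ⟩ := Metric.isOpen_iff.mp hΩ z hzΩ
    set L : ℝ → EuclideanSpace ℝ (Fin n) := fun t => z + t • e with hLdef
    have hL0 : L 0 = z := by simp [hLdef]
    have hLd : ∀ t : ℝ, HasDerivAt L e t := by
      intro t
      have := ((hasDerivAt_id t).smul_const e).const_add z
      simpa [hLdef] using this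
    have hmem : ∀ t : ℝ, |t| < δ → L t ∈ Ω := by
      intro t ht
      apply hδ
      have : dist (L t) z = |t| := by
        simp [hLdef, dist_eq_norm, norm_smul, he, EuclideanSpace.norm_single]
      simpa [Metric.mem_ball, this] using ht
    have hd1 : ∀ t : ℝ, |t| < δ → HasDerivAt (fun s => v (L s)) (fderiv ℝ v (L t) e) t := by
      intro t ht
      have hvd : DifferentiableAt ℝ v (L t) :=
        (hv2.contDiffAt (hΩ.mem_nhds (hmem t ht))).differentiableAt (by norm_num)
      exact hvd.hasFDerivAt.comp_hasDerivAt t (hLd t)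
    -- the directional derivative vanishes at 0
    have hlm : IsLocalMax (fun t => v (L t)) 0 := by
      filter_upwards [Metric.ball_mem_nhds (0 : ℝ) δpos] with t ht
      have ht' : |t| < δ := by simpa [Real.dist_eq] using ht
      have := hmax (subset_closure (hmem t ht'))
      simpa [hL0] using this
    have hzero : fderiv ℝ v (L 0) e = 0 :=
      hlm.hasDerivAt_eq_zero (hd1 0 (by simpa using δpos))
    -- second directional derivative
    have hd2 : HasDerivAt (fun t => fderiv ℝ v (L t) e)
        (fderiv ℝ (fun y => fderiv ℝ v y e) z e) 0 := by
      have hdd := (diff_dirderiv hΩ hv2 hzΩ e).hasFDerivAt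
      have := hdd.comp_hasDerivAt_of_eq 0 (hLd 0) hL0.symm
      exact this
    -- the directional derivative is positive just right of 0
    have hslope : Filter.Tendsto (slope (fun t => fderiv ℝ v (L t) e) 0)
        (nhdsWithin 0 {(0:ℝ)}ᶜ) (nhds (fderiv ℝ (fun y => fderiv ℝ v y e) z e)) :=
      hasDerivAt_iff_tendsto_slope.mp hd2
    have hev : ∀ᶠ t in nhdsWithin (0:ℝ) (Set.Ioi 0),
        0 < slope (fun t => fderiv ℝ v (L t) e) 0 t := by
      have h1 : ∀ᶠ t in nhdsWithin (0:ℝ) {(0:ℝ)}ᶜ,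
          0 < slope (fun t => fderiv ℝ v (L t) e) 0 t :=
        hslope.eventually (eventually_gt_nhds hi)
      exact h1.filter_mono (nhdsWithin_mono 0 (fun t ht => ne_of_gt ht))
    have hev' : ∀ᶠ t in nhdsWithin (0:ℝ) (Set.Ioi 0),
        0 < fderiv ℝ v (L t) e := by
      filter_upwards [hev, self_mem_nhdsWithin] with t ht ht0
      have ht0' : (0:ℝ) < t := ht0
      have : slope (fun t => fderiv ℝ v (L t) e) 0 t
          = (fderiv ℝ v (L t) e) / t := by
        simp [slope_def_field, hzero]
      rw [this] at ht
      exact (div_pos_iff.mp ht).resolve_right (fun h => absurd h.2 (not_lt.mpr ht0'.le)) |>.1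
    obtain ⟨u', hu'mem, hu'⟩ := mem_nhdsGT_iff_exists_Ioo_subset.mp hev'
    have hu'pos : (0:ℝ) < u' := hu'mem
    set t₀ : ℝ := min u' δ / 2 with ht₀def
    have ht₀pos : 0 < t₀ := by positivity
    have ht₀δ : t₀ < δ := by
      have : t₀ ≤ δ / 2 := by
        apply div_le_div_of_nonneg_right (min_le_right _ _) (by norm_num) |>.trans_eq rfl
      linarith
    have ht₀u' : t₀ < u' := by
      have : t₀ ≤ u' / 2 := by
        apply div_le_div_of_nonneg_right (min_le_left _ _) (by norm_num) |>.trans_eq rfl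
      linarith
    -- MVT on [0, t₀]
    have hcont : ContinuousOn (fun s => v (L s)) (Set.Icc 0 t₀) := by
      intro s hs
      have : |s| < δ := by
        rw [abs_lt]; constructor <;> [linarith [hs.1]; linarith [hs.2]]
      exact (hd1 s this).continuousAt.continuousWithinAt
    have hdiff : ∀ s ∈ Set.Ioo (0:ℝ) t₀,
        HasDerivAt (fun s => v (L s)) (fderiv ℝ v (L s) e) s := by
      intro s hs
      have : |s| < δ := by rw [abs_lt]; constructor <;> [linarith [hs.1]; linarith [hs.2]]
      exact hd1 s this
    obtain ⟨ξ, hξ, hξeq⟩ := exists_hasDerivAt_eq_slope (fun s => v (L s))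
      (fun s => fderiv ℝ v (L s) e) ht₀pos hcont hdiff
    have hξpos : 0 < fderiv ℝ v (L ξ) e := by
      apply hu'
      exact ⟨hξ.1, lt_trans hξ.2 ht₀u'⟩
    have hnum : v (L t₀) - v (L 0) ≤ 0 := by
      have h1 : v (L t₀) ≤ v z := hmax (subset_closure (hmem t₀ (by rw [abs_of_pos ht₀pos]; exact ht₀δ)))
      rw [hL0]
      linarith
    rw [hξeq] at hξpos
    have : (v (L t₀) - v (L 0)) / (t₀ - 0) ≤ 0 :=
      div_nonpos_of_nonpos_of_nonneg (by simpa using hnum) (by linarith)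
    linarith
  · refine ⟨z, ?_, hmax hx₀⟩
    rw [hΩ.frontier_eq]
    exact ⟨hz, hzΩ⟩

lemma poisson_upper {n : ℕ} (hn : 1 ≤ n) {Ω : Set (EuclideanSpace ℝ (Fin n))}
    (hΩ : IsOpen Ω) {c : EuclideanSpace ℝ (Fin n)} {R : ℝ}
    (hball : Ω ⊆ Metric.closedBall c R) {w : EuclideanSpace ℝ (Fin n) → ℝ} {K : ℝ}
    (hK : 0 ≤ K) (hwc : ContinuousOn w (closure Ω)) (hw2 : ContDiffOn ℝ 2 w Ω)
    (hlap : ∀ x ∈ Ω, -K ≤ lap w x) (hbdry : ∀ x ∈ frontier Ω, w x = 0)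
    {x₀ : EuclideanSpace ℝ (Fin n)} (hx₀ : x₀ ∈ closure Ω) :
    w x₀ ≤ R ^ 2 / (2 * n) * K := by
  have npos : (0:ℝ) < 2 * n := by
    have : (1:ℝ) ≤ n := by exact_mod_cast hn
    linarith
  have hcl : closure Ω ⊆ Metric.closedBall c R :=
    closure_minimal hball Metric.isClosed_closedBall
  have hcomp : IsCompact (closure Ω) :=
    (isCompact_closedBall c R).of_isClosed_subset isClosed_closure hcl
  have key : ∀ ε > (0:ℝ), w x₀ ≤ (K + ε) / (2 * n) * R ^ 2 := by
    intro ε hε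
    set a : ℝ := (K + ε) / (2 * n) with ha
    set q : EuclideanSpace ℝ (Fin n) → ℝ := fun y => (inner ℝ (y - c) (y - c) : ℝ) with hq
    have hqsmooth : ContDiff ℝ 2 (fun y => a * q y) :=
      contDiff_const.mul ((contDiff_id.sub contDiff_const).inner ℝ
        (contDiff_id.sub contDiff_const))
    have hqnonneg : ∀ y, 0 ≤ q y := fun y => real_inner_self_nonneg
    set v : EuclideanSpace ℝ (Fin n) → ℝ := fun y => w y + a * q y with hv
    have hvc : ContinuousOn v (closure Ω) := hwc.add hqsmooth.continuous.continuousOn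
    have hv2 : ContDiffOn ℝ 2 v Ω := hw2.add hqsmooth.contDiffOn
    have hsub : ∀ x ∈ Ω, 0 < lap v x := by
      intro x hx
      have hla : lap v x = lap w x + a * (2 * n) := by
        rw [hv]
        rw [lap_add hΩ hw2 hqsmooth hx]
        congr 1
        exact lap_quad a c x
      rw [hla]
      have h1 := hlap x hx
      have h2 : a * (2 * n) = K + ε := by
        rw [ha]; field_simp
      rw [h2]; linarith
    obtain ⟨y, hy, hle⟩ := max_principle hΩ hcomp hvc hv2 hsub hx₀
    have hycl : y ∈ closure Ω := frontier_subset_closure hy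
    have hyball : dist y c ≤ R := hcl hycl
    have hqy : q y ≤ R ^ 2 := by
      have h1 : q y = ‖y - c‖ ^ 2 := real_inner_self_eq_norm_sq _
      have h2 : ‖y - c‖ ≤ R := by rwa [← dist_eq_norm]
      rw [h1]
      have := norm_nonneg (y - c)
      nlinarith
    have hanonneg : 0 ≤ a := by
      rw [ha]; positivity
    have step1 : w x₀ ≤ v x₀ := le_add_of_nonneg_right (mul_nonneg hanonneg (hqnonneg x₀))
    have step2 : v y = a * q y := by rw [hv]; simp [hbdry y hy]
    have step3 : a * q y ≤ a * R ^ 2 := mul_le_mul_of_nonneg_left hqy hanonneg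
    calc w x₀ ≤ v x₀ := step1
      _ ≤ v y := hle
      _ = a * q y := step2
      _ ≤ a * R ^ 2 := step3
  have htend : Filter.Tendsto (fun ε : ℝ => (K + ε) / (2 * n) * R ^ 2)
      (nhdsWithin 0 (Set.Ioi 0)) (nhds ((K + 0) / (2 * n) * R ^ 2)) := by
    have hc : Continuous (fun ε : ℝ => (K + ε) / (2 * n) * R ^ 2) := by
      continuity
    exact (hc.tendsto 0).mono_left nhdsWithin_le_nhds
  have hev : ∀ᶠ ε in nhdsWithin (0:ℝ) (Set.Ioi 0),
      w x₀ ≤ (K + ε) / (2 * n) * R ^ 2 := by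
    filter_upwards [self_mem_nhdsWithin] with ε hε
    exact key ε hε
  have hfinal := ge_of_tendsto htend hev
  have : (K + 0) / (2 * n) * R ^ 2 = R ^ 2 / (2 * n) * K := by ring
  linarith

lemma poisson_abs_bound {n : ℕ} (hn : 1 ≤ n) {Ω : Set (EuclideanSpace ℝ (Fin n))}
    (hΩ : IsOpen Ω) {c : EuclideanSpace ℝ (Fin n)} {R : ℝ}
    (hball : Ω ⊆ Metric.closedBall c R) {w : EuclideanSpace ℝ (Fin n) → ℝ} {K : ℝ}
    (hK : 0 ≤ K) (hwc : ContinuousOn w (closure Ω)) (hw2 : ContDiffOn ℝ 2 w Ω)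
    (hlap : ∀ x ∈ Ω, |lap w x| ≤ K) (hbdry : ∀ x ∈ frontier Ω, w x = 0)
    {x₀ : EuclideanSpace ℝ (Fin n)} (hx₀ : x₀ ∈ closure Ω) :
    |w x₀| ≤ R ^ 2 / (2 * n) * K := by
  rw [abs_le]
  constructor
  · have hneg := poisson_upper hn hΩ hball hK (hwc.neg) (hw2.neg)
      (fun x hx => by
        change -K ≤ lap (fun y => -(w y)) x
        rw [lap_neg]
        have := (abs_le.mp (hlap x hx)).2
        linarith)
      (fun x hx => by rw [Pi.neg_apply, hbdry x hx]; ring) hx₀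
    rw [Pi.neg_apply] at hneg
    linarith
  · exact poisson_upper hn hΩ hball hK hwc hw2
      (fun x hx => (abs_le.mp (hlap x hx)).1) hbdry hx₀


/-- the operator `A` maps the ball `B[O,M]` into itself: if `|f| ≤ M` on
`D_M`, `‖φ‖ ≤ M` and `u` is the classical solution of `Δ³u = φ` with homogeneous
boundary conditions, then `‖u‖ ≤ C_Ω³M`, `‖Δu‖ ≤ C_Ω²M`, `‖Δ²u‖ ≤ C_ΩM` and
`max_{x∈Ω̄} |f(x, u, Δu, Δ²u)| ≤ M`. -/
theorem statement7 {n : ℕ} (hn : 2 ≤ n)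
    (Ω : Set (EuclideanSpace ℝ (Fin n))) (hΩopen : IsOpen Ω) (hΩconn : IsConnected Ω)
    (R : ℝ) (c : EuclideanSpace ℝ (Fin n)) (hball : Ω ⊆ Metric.closedBall c R)
    (CΩ : ℝ) (hCΩ : CΩ = R ^ 2 / (2 * n))
    (f : EuclideanSpace ℝ (Fin n) → ℝ → ℝ → ℝ → ℝ)
    (hf : ContinuousOn (fun p : EuclideanSpace ℝ (Fin n) × ℝ × ℝ × ℝ =>
      f p.1 p.2.1 p.2.2.1 p.2.2.2)
      ((closure Ω) ×ˢ (Set.univ : Set (ℝ × ℝ × ℝ))))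
    (M : ℝ) (hM : 0 < M)
    -- boundedness of `f` on `D_M`
    (hbound : ∀ x ∈ Ω, ∀ u v w : ℝ,
      |u| ≤ CΩ ^ 3 * M → |v| ≤ CΩ ^ 2 * M → |w| ≤ CΩ * M → |f x u v w| ≤ M)
    (φ u : EuclideanSpace ℝ (Fin n) → ℝ)
    (hφ : ContinuousOn φ (closure Ω)) (hφM : ∀ x ∈ closure Ω, |φ x| ≤ M)
    (hu : IsClassicalTriharm Ω u φ) :
    (∀ x ∈ closure Ω,
      |u x| ≤ CΩ ^ 3 * M ∧ |lap u x| ≤ CΩ ^ 2 * M ∧ |lap (lap u) x| ≤ CΩ * M) ∧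
    (∀ x ∈ closure Ω, |f x (u x) (lap u x) (lap (lap u) x)| ≤ M) := by
  obtain ⟨huc, hluc, hlluc, hu2, hlu2, hllu2, heq, hbdry⟩ := hu
  have hn1 : 1 ≤ n := le_trans (by norm_num) hn
  have hCΩ0 : 0 ≤ CΩ := by
    rw [hCΩ]
    have : (0:ℝ) < n := by exact_mod_cast lt_of_lt_of_le (by norm_num) hn
    positivity
  have h3 : ∀ x ∈ closure Ω, |lap (lap u) x| ≤ CΩ * M := by
    intro x hx
    have hb := poisson_abs_bound hn1 hΩopen hball (le_of_lt hM) hlluc hllu2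
      (fun y hy => by rw [heq y hy]; exact hφM y (subset_closure hy))
      (fun y hy => (hbdry y hy).2.2) hx
    rw [hCΩ]
    exact hb
  have h2 : ∀ x ∈ closure Ω, |lap u x| ≤ CΩ ^ 2 * M := by
    intro x hx
    have hb := poisson_abs_bound hn1 hΩopen hball (mul_nonneg hCΩ0 hM.le) hluc hlu2
      (fun y hy => h3 y (subset_closure hy))
      (fun y hy => (hbdry y hy).2.1) hx
    calc |lap u x| ≤ R ^ 2 / (2 * n) * (CΩ * M) := hb
      _ = CΩ ^ 2 * M := by rw [hCΩ]; ring
  have h1 : ∀ x ∈ closure Ω, |u x| ≤ CΩ ^ 3 * M := by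
    intro x hx
    have hb := poisson_abs_bound hn1 hΩopen hball
      (mul_nonneg (pow_nonneg hCΩ0 2) hM.le) huc hu2
      (fun y hy => h2 y (subset_closure hy))
      (fun y hy => (hbdry y hy).1) hx
    calc |u x| ≤ R ^ 2 / (2 * n) * (CΩ ^ 2 * M) := hb
      _ = CΩ ^ 3 * M := by rw [hCΩ]; ring
  refine ⟨fun x hx => ⟨h1 x hx, h2 x hx, h3 x hx⟩, ?_⟩
  intro x hx
  set F : EuclideanSpace ℝ (Fin n) → ℝ :=
    fun x => f x (u x) (lap u x) (lap (lap u) x) with hF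
  have hFc : ContinuousOn F (closure Ω) := by
    have hg : ContinuousOn (fun y : EuclideanSpace ℝ (Fin n) =>
        (y, u y, lap u y, lap (lap u) y)) (closure Ω) :=
      continuousOn_id.prodMk (huc.prodMk (hluc.prodMk hlluc))
    have hmap : Set.MapsTo (fun y : EuclideanSpace ℝ (Fin n) =>
        (y, u y, lap u y, lap (lap u) y)) (closure Ω)
        ((closure Ω) ×ˢ (Set.univ : Set (ℝ × ℝ × ℝ))) :=
      fun y hy => ⟨hy, trivial⟩
    exact hf.comp hg hmap
  have hFΩ : ∀ y ∈ Ω, |F y| ≤ M := fun y hy =>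
    hbound y hy _ _ _ (h1 y (subset_closure hy)) (h2 y (subset_closure hy))
      (h3 y (subset_closure hy))
  have hne : (nhdsWithin x Ω).NeBot := mem_closure_iff_nhdsWithin_neBot.mp hx
  have htend : Filter.Tendsto F (nhdsWithin x Ω) (nhds (F x)) :=
    (hFc x hx).mono subset_closure
  have habs : Filter.Tendsto (fun y => |F y|) (nhdsWithin x Ω) (nhds |F x|) :=
    (continuous_abs.tendsto _).comp htend
  exact le_of_tendsto habs (Filter.eventually_of_mem self_mem_nhdsWithin hFΩ)
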